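/- There exist a probability distribution F on [0,1] supported on a single point (a point mass) and a constant c > 0, independent of m, such that for every positive integer m, sup_{x ∈ [0,1]} |F^{(m)}(x) − F(x)| ≥ c. In particular, one may take F to be the Dirac mass at 1/2 + κ for a sufficiently small irrational κ > 0. -/

import Mathlib

open MeasureTheory ProbabilityTheory Real

noncomputable section

/-- pmf of Binomial(m, s) at k. -/
def binomPMFr (m k : ℕ) (s : ℝ) : ℝ := (m.choose k : ℝ) * s ^ k * (1 - s) ^ (m - k)

/-- Law of ŝ = X/m where X ~ Binomial(m, s). -/
def binomLaw (m : ℕ) (s : ℝ) : Measure ℝ :=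
  ∑ k ∈ Finset.range (m + 1), ENNReal.ofReal (binomPMFr m k s) • Measure.dirac ((k : ℝ) / m)

/-- Binomial-mixture law of ŝ where s ~ μ. -/
def mixLaw (μ : Measure ℝ) (m : ℕ) : Measure ℝ := μ.bind (binomLaw m)

/-- CDF of a measure. -/
def cdfOf (μ : Measure ℝ) (x : ℝ) : ℝ := (μ (Set.Iic x)).toReal

lemma binomPMFr_nonneg {m k : ℕ} {s : ℝ} (h0 : 0 ≤ s) (h1 : s ≤ 1) :
    0 ≤ binomPMFr m k s := by
  have : 0 ≤ 1 - s := by linarith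
  unfold binomPMFr
  positivity

lemma binomPMFr_sum {m : ℕ} (s : ℝ) :
    ∑ k ∈ Finset.range (m + 1), binomPMFr m k s = 1 := by
  have h := add_pow s (1 - s) m
  simp only [add_sub_cancel, one_pow] at h
  calc ∑ k ∈ Finset.range (m + 1), binomPMFr m k s
      = ∑ k ∈ Finset.range (m + 1), s ^ k * (1 - s) ^ (m - k) * (m.choose k : ℝ) := by
        apply Finset.sum_congr rfl; intro k _; unfold binomPMFr; ring
    _ = 1 := h.symm

lemma measurable_binomLaw (m : ℕ) : Measurable (binomLaw m) := by
  rw [Measure.measurable_measure]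
  intro s hs
  simp only [binomLaw, Measure.finset_sum_apply, Measure.smul_apply, smul_eq_mul]
  apply Finset.measurable_sum
  intro k _
  exact (ENNReal.measurable_ofReal.comp (by unfold binomPMFr; fun_prop)).mul measurable_const

lemma cdfOf_binomLaw (m : ℕ) {p : ℝ} (h0 : 0 ≤ p) (h1 : p ≤ 1) (x : ℝ) :
    cdfOf (binomLaw m p) x
      = ∑ k ∈ Finset.range (m + 1), if (k : ℝ) / m ≤ x then binomPMFr m k p else 0 := by
  unfold cdfOf binomLaw
  rw [Measure.finset_sum_apply]
  rw [ENNReal.toReal_sum (by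
    intro k _
    simp [Measure.smul_apply]
    exact ENNReal.mul_ne_top ENNReal.ofReal_ne_top (by
      simp [Measure.dirac_apply' _ measurableSet_Iic]
      exact ne_of_lt (lt_of_le_of_lt (Set.indicator_le_self' (by simp) _) (by norm_num))))]
  apply Finset.sum_congr rfl
  intro k _
  rw [Measure.smul_apply, Measure.dirac_apply' _ measurableSet_Iic, Set.indicator_apply]
  by_cases hk : (k : ℝ) / m ≤ x
  · simp [hk, ENNReal.toReal_ofReal (binomPMFr_nonneg h0 h1)]
  · simp [hk]

lemma cdfOf_dirac (p x : ℝ) : cdfOf (Measure.dirac p) x = if p ≤ x then 1 else 0 := by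
  unfold cdfOf
  rw [Measure.dirac_apply' _ measurableSet_Iic, Set.indicator_apply]
  by_cases h : p ≤ x <;> simp [h, Set.mem_Iic]

/-- There is a point-mass distribution `F` on `[0,1]` (the Dirac mass at
`1/2 + κ` for a sufficiently small irrational `κ > 0`) and a constant `c > 0`, independent
of `m`, such that for every positive integer `m`,
`sup_{x ∈ [0,1]} |F^{(m)}(x) − F(x)| ≥ c`. -/
theorem stmt2 :
    ∃ κ : ℝ, 0 < κ ∧ Irrational κ ∧ (1/2 + κ) ∈ Set.Icc (0:ℝ) 1 ∧
      ∃ c : ℝ, 0 < c ∧ ∀ m : ℕ, 1 ≤ m →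
        c ≤ ⨆ x : Set.Icc (0:ℝ) 1,
              |cdfOf (mixLaw (Measure.dirac (1/2 + κ)) m) x
                - cdfOf (Measure.dirac (1/2 + κ)) x| := by
  have h2 : (1:ℝ) < Real.sqrt 2 := by
    nlinarith [Real.sq_sqrt (by norm_num : (2:ℝ) ≥ 0), Real.sqrt_nonneg 2]
  have h2' : Real.sqrt 2 < 3/2 := by
    nlinarith [Real.sq_sqrt (by norm_num : (2:ℝ) ≥ 0), Real.sqrt_nonneg 2]
  refine ⟨Real.sqrt 2 - 1, by linarith, by
      simpa using irrational_sqrt_two.sub_intCast 1, ⟨by linarith, by linarith⟩, 1/2, by norm_num, ?_⟩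
  set p : ℝ := 1/2 + (Real.sqrt 2 - 1) with hpdef
  have hp0 : 0 < p := by simp only [hpdef]; linarith
  have hp1 : p < 1 := by simp only [hpdef]; linarith
  have hpirr : Irrational p := by
    have : p = Real.sqrt 2 + (-(1/2) : ℚ) := by push_cast [hpdef]; ring
    rw [this]; exact irrational_sqrt_two.add_ratCast _
  intro m hm
  -- reduce mixLaw
  have hmix : mixLaw (Measure.dirac p) m = binomLaw m p :=
    Measure.dirac_bind (measurable_binomLaw m) p
  have hmp_irr : Irrational ((m : ℝ) * p) := hpirr.natCast_mul (by omega)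
  set j : ℕ := ⌊(m : ℝ) * p⌋₊ with hjdef
  have hm0 : (0:ℝ) < m := by exact_mod_cast hm
  have hjlt : (j : ℝ) < (m : ℝ) * p := by
    refine lt_of_le_of_ne (Nat.floor_le (by positivity)) ?_
    exact fun h => hmp_irr.ne_nat j h.symm
  have hjm : (j : ℝ) / m < p := by rw [div_lt_iff₀ hm0]; linarith [hjlt]
  -- the common cdf value A
  set A : ℝ := ∑ k ∈ Finset.range (m + 1), if k ≤ j then binomPMFr m k p else 0 with hAdef
  have hkey : ∀ k : ℕ, ((k : ℝ) / m ≤ (j : ℝ) / m ↔ k ≤ j) ∧ ((k : ℝ) / m ≤ p ↔ k ≤ j) := by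
    intro k
    constructor
    · rw [div_le_div_iff_of_pos_right hm0, Nat.cast_le]
    · rw [div_le_iff₀ hm0, mul_comm]
      constructor
      · intro h
        exact Nat.le_floor (le_of_lt (lt_of_le_of_ne h (fun he => hmp_irr.ne_nat k he.symm)))
      · intro h
        calc (k:ℝ) ≤ j := by exact_mod_cast h
          _ ≤ (m:ℝ) * p := le_of_lt hjlt
  have hcdf1 : cdfOf (binomLaw m p) ((j : ℝ) / m) = A := by
    rw [cdfOf_binomLaw m (le_of_lt hp0) (le_of_lt hp1)]
    apply Finset.sum_congr rfl
    intro k _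
    rw [if_congr ((hkey k).1) rfl rfl]
  have hcdf2 : cdfOf (binomLaw m p) p = A := by
    rw [cdfOf_binomLaw m (le_of_lt hp0) (le_of_lt hp1)]
    apply Finset.sum_congr rfl
    intro k _
    rw [if_congr ((hkey k).2) rfl rfl]
  have hA0 : 0 ≤ A := by
    apply Finset.sum_nonneg
    intro k _
    split
    · exact binomPMFr_nonneg (le_of_lt hp0) (le_of_lt hp1)
    · exact le_rfl
  have hA1 : A ≤ 1 := by
    rw [hAdef]
    refine le_trans (Finset.sum_le_sum ?_) (le_of_eq (binomPMFr_sum (m := m) p))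
    intro k _
    split
    · exact le_rfl
    · exact binomPMFr_nonneg (le_of_lt hp0) (le_of_lt hp1)
  -- bddAbove
  have hbdd : BddAbove (Set.range fun x : Set.Icc (0:ℝ) 1 =>
      |cdfOf (mixLaw (Measure.dirac p) m) x - cdfOf (Measure.dirac p) x|) := by
    refine ⟨1 + 1, ?_⟩
    rintro y ⟨x, rfl⟩
    have hc1 : cdfOf (mixLaw (Measure.dirac p) m) x ≤ 1 := by
      rw [hmix, cdfOf_binomLaw m (le_of_lt hp0) (le_of_lt hp1)]
      refine le_trans (Finset.sum_le_sum ?_) (le_of_eq (binomPMFr_sum (m := m) p))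
      intro k _
      split
      · exact le_rfl
      · exact binomPMFr_nonneg (le_of_lt hp0) (le_of_lt hp1)
    have hc1' : 0 ≤ cdfOf (mixLaw (Measure.dirac p) m) x := ENNReal.toReal_nonneg
    have hc2 : cdfOf (Measure.dirac p) x ≤ 1 := by
      rw [cdfOf_dirac]; split <;> norm_num
    have hc2' : 0 ≤ cdfOf (Measure.dirac p) x := ENNReal.toReal_nonneg
    rw [abs_le]
    constructor <;> linarith
  rcases le_or_gt (1/2 : ℝ) A with hA | hA
  · -- use x = j/m
    have hx : (j : ℝ) / m ∈ Set.Icc (0:ℝ) 1 := ⟨by positivity, le_of_lt (lt_of_lt_of_le hjm (le_of_lt hp1))⟩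
    refine le_trans ?_ (le_ciSup hbdd ⟨_, hx⟩)
    rw [hmix, hcdf1, cdfOf_dirac, if_neg (not_le.mpr hjm)]
    rw [sub_zero, abs_of_nonneg hA0]
    exact hA
  · -- use x = p
    have hx : p ∈ Set.Icc (0:ℝ) 1 := ⟨le_of_lt hp0, le_of_lt hp1⟩
    refine le_trans ?_ (le_ciSup hbdd ⟨_, hx⟩)
    rw [hmix, hcdf2, cdfOf_dirac, if_pos le_rfl]
    rw [abs_sub_comm, abs_of_nonneg (by linarith)]
    linarith
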